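/- For any fixed t1, any point t2 at which the left derivative of t2 ↦ MI(t1,t2,a) strictly exceeds the right derivative belongs to {e_min, e_max, s_min + e_max - t1}. -/

import Mathlib

/-- Minimum intersection of an activity (sMin, sMax, p) with interval [t1,t2]. -/
noncomputable def MI (sMin sMax p t1 t2 : ℝ) : ℝ :=
  max 0 (min (min p (t2 - t1)) (min (sMin + p - t1) (t2 - sMax)))

/-- Left derivative. -/
noncomputable def leftD (f : ℝ → ℝ) (x : ℝ) : ℝ := derivWithin f (Set.Iio x) x

/-- Right derivative. -/
noncomputable def rightD (f : ℝ → ℝ) (x : ℝ) : ℝ := derivWithin f (Set.Ioi x) x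

private lemma derivWithin_eq_of_nhds {f g : ℝ → ℝ} {x : ℝ} (h : f =ᶠ[nhds x] g)
    (s : Set ℝ) : derivWithin f s x = derivWithin g s x :=
  (h.filter_mono nhdsWithin_le_nhds).derivWithin_eq h.eq_of_nhds

theorem mi_inflection_location (sMin sMax p t1 : ℝ)
    (hs : sMin ≤ sMax) (hp : 0 ≤ p) :
    ∀ x : ℝ,
      leftD (fun t2 => MI sMin sMax p t1 t2) x >
        rightD (fun t2 => MI sMin sMax p t1 t2) x →
      x = sMin + p ∨ x = sMax + p ∨ x = sMin + (sMax + p) - t1 := by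
  intro x hx
  set A : ℝ := min p (sMin + p - t1) with hA
  set m : ℝ := max t1 sMax with hm
  have hf : (fun t2 => MI sMin sMax p t1 t2)
      = fun t => max 0 (min A (t - m)) := by
    funext t
    unfold MI
    congr 1
    have h1 : t - m = min (t - t1) (t - sMax) := by
      rcases le_total t1 sMax with h | h
      · rw [hm, max_eq_right h, min_eq_right (by linarith)]
      · rw [hm, max_eq_left h, min_eq_left (by linarith)]
    rw [hA, h1, min_min_min_comm]
  rw [hf] at hx
  by_cases hA0 : A ≤ 0
  · exfalso
    have hzero : (fun t : ℝ => max 0 (min A (t - m))) = fun _ => (0:ℝ) := by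
      funext t
      exact max_eq_left ((min_le_left _ _).trans hA0)
    rw [hzero] at hx
    unfold leftD rightD at hx
    rw [derivWithin_fun_const (s := Set.Iio x),
      derivWithin_fun_const (s := Set.Ioi x), Pi.zero_apply] at hx
    exact lt_irrefl _ hx
  push_neg at hA0
  by_cases hx3 : x = m + A
  · -- x is the concave kink: identify which of the three points it is
    by_cases h1 : t1 ≤ sMin
    · right; left
      have hAp : A = p := min_eq_left (by linarith)
      have hmm : m = sMax := max_eq_right (le_trans h1 hs)
      rw [hx3, hAp, hmm]
    · push_neg at h1
      have hAc : A = sMin + p - t1 := min_eq_right (by linarith)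
      rcases le_total t1 sMax with h2 | h2
      · right; right
        have hmm : m = sMax := max_eq_right h2
        rw [hx3, hAc, hmm]; ring
      · left
        have hmm : m = t1 := max_eq_left h2
        rw [hx3, hAc, hmm]; ring
  · exfalso
    unfold leftD rightD at hx
    rcases lt_trichotomy x m with h | h | h
    · -- f is locally 0
      have hev : (fun t : ℝ => max 0 (min A (t - m))) =ᶠ[nhds x] (fun _ => (0:ℝ)) := by
        filter_upwards [eventually_lt_nhds h] with t ht
        exact max_eq_left ((min_le_right _ _).trans (by linarith))
      rw [derivWithin_eq_of_nhds hev, derivWithin_eq_of_nhds hev,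
        derivWithin_fun_const (s := Set.Iio x),
        derivWithin_fun_const (s := Set.Ioi x), Pi.zero_apply] at hx
      exact lt_irrefl _ hx
    · -- x = m : leftD = 0, rightD = 1
      subst h
      have hfm : max 0 (min A (m - m)) = 0 := by
        apply max_eq_left
        simp
      have hL : derivWithin (fun t : ℝ => max 0 (min A (t - m))) (Set.Iio m) m = 0 := by
        have hev0 : (fun t : ℝ => max 0 (min A (t - m)))
            =ᶠ[nhdsWithin m (Set.Iio m)] (fun _ => (0:ℝ)) := by
          filter_upwards [self_mem_nhdsWithin] with t ht
          simp only [Set.mem_Iio] at ht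
          exact max_eq_left ((min_le_right _ _).trans (by linarith))
        rw [hev0.derivWithin_eq hfm]
        simp
      have hR : derivWithin (fun t : ℝ => max 0 (min A (t - m))) (Set.Ioi m) m = 1 := by
        have hev : (fun t : ℝ => max 0 (min A (t - m)))
            =ᶠ[nhdsWithin m (Set.Ioi m)] (fun t => t - m) := by
          filter_upwards [(eventually_lt_nhds (by linarith : m < m + A)).filter_mono
            nhdsWithin_le_nhds, self_mem_nhdsWithin] with t h2 h3
          simp only [Set.mem_Ioi] at h3
          rw [min_eq_right (by linarith), max_eq_right (by linarith)]
        rw [hev.derivWithin_eq (by simpa using hfm)]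
        rw [derivWithin_sub_const]
        exact derivWithin_id m _ (uniqueDiffWithinAt_Ioi m)
      rw [hL, hR] at hx
      linarith
    · rcases lt_or_gt_of_ne hx3 with h2 | h2
      · -- m < x < m + A : f is locally t - m
        have hev : (fun t : ℝ => max 0 (min A (t - m))) =ᶠ[nhds x] (fun t => t - m) := by
          filter_upwards [Ioo_mem_nhds h h2] with t ht
          obtain ⟨ht1, ht2⟩ := ht
          rw [min_eq_right (by linarith), max_eq_right (by linarith)]
        have d1 : derivWithin (fun t : ℝ => t - m) (Set.Ioi x) x = 1 := by
          rw [derivWithin_sub_const]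
          exact derivWithin_id x _ (uniqueDiffWithinAt_Ioi x)
        have d2 : derivWithin (fun t : ℝ => t - m) (Set.Iio x) x = 1 := by
          rw [derivWithin_sub_const]
          exact derivWithin_id x _ (uniqueDiffWithinAt_Iio x)
        rw [derivWithin_eq_of_nhds hev, derivWithin_eq_of_nhds hev, d1, d2] at hx
        exact lt_irrefl _ hx
      · -- x > m + A : f is locally A
        have hev : (fun t : ℝ => max 0 (min A (t - m))) =ᶠ[nhds x] (fun _ => A) := by
          filter_upwards [eventually_gt_nhds h2] with t ht
          rw [min_eq_left (by linarith), max_eq_right (by linarith)]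
        rw [derivWithin_eq_of_nhds hev, derivWithin_eq_of_nhds hev,
          derivWithin_fun_const (s := Set.Iio x),
          derivWithin_fun_const (s := Set.Ioi x), Pi.zero_apply] at hx
        exact lt_irrefl _ hx
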